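/- Let p > 0 and d > 1, and let (a_n) satisfy a_0 = -1 and the recurrence a_{n+1} = a_n · (n(n-1) + 2(d-1)n - p(d-1)) / (2(n+1)(n+d-1)) for n ≥ 0. Then the function g(s) = ∑_{n=0}^∞ a_n (1+s)^n, defined for s ∈ (-1, 1), satisfies the differential equation (1 - s²) g''(s) - 2(d-1) s g'(s) + p(d-1) g(s) = 0 for all s ∈ (-1, 1). -/

import Mathlib

open Set Filter Topology

lemma aux_geom (b : ℕ → ℝ) (hb : ∀ n, 0 ≤ b n) {e : ℝ} (he : 0 < e) (N : ℕ)
    (h : ∀ n, N ≤ n → b (n + 1) ≤ e * b n) : ∃ C, 0 < C ∧ ∀ n, b n ≤ C * e ^ n := by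
  have step : ∀ k, b (N + k) ≤ b N * e ^ k := by
    intro k
    induction k with
    | zero => simp
    | succ k ih =>
      have h1 : b (N + (k + 1)) ≤ e * b (N + k) := h (N + k) (by omega)
      have h2 : e * b (N + k) ≤ e * (b N * e ^ k) := by
        exact mul_le_mul_of_nonneg_left ih he.le
      calc b (N + (k + 1)) ≤ e * (b N * e ^ k) := h1.trans h2
        _ = b N * e ^ (k + 1) := by ring
  have hsnn : ∀ i ∈ Finset.range (N + 1), 0 ≤ b i / e ^ i :=
    fun i _ => div_nonneg (hb i) (pow_nonneg he.le i)
  refine ⟨(∑ i ∈ Finset.range (N + 1), b i / e ^ i) + 1, ?_, ?_⟩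
  · have := Finset.sum_nonneg hsnn
    linarith
  · intro n
    have hen : (0:ℝ) < e ^ n := pow_pos he n
    by_cases hn : n ≤ N
    · have h1 : b n / e ^ n ≤ ∑ i ∈ Finset.range (N + 1), b i / e ^ i :=
        Finset.single_le_sum hsnn (Finset.mem_range.mpr (by omega))
      rw [div_le_iff₀ hen] at h1
      nlinarith
    · push_neg at hn
      have h1 := step (n - N)
      rw [Nat.add_sub_cancel' hn.le] at h1
      have h2 : b N / e ^ N ≤ ∑ i ∈ Finset.range (N + 1), b i / e ^ i :=
        Finset.single_le_sum hsnn (Finset.mem_range.mpr (by omega))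
      have heN : (0:ℝ) < e ^ N := pow_pos he N
      rw [div_le_iff₀ heN] at h2
      have h3 : e ^ N * e ^ (n - N) = e ^ n := by
        rw [← pow_add]; congr 1; omega
      have h4 : (0:ℝ) ≤ e ^ (n - N) := pow_nonneg he.le _
      calc b n ≤ b N * e ^ (n - N) := h1
        _ ≤ ((∑ i ∈ Finset.range (N + 1), b i / e ^ i) * e ^ N) * e ^ (n - N) := by
            exact mul_le_mul_of_nonneg_right h2 h4
        _ = (∑ i ∈ Finset.range (N + 1), b i / e ^ i) * e ^ n := by
            rw [mul_assoc, h3]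
        _ ≤ ((∑ i ∈ Finset.range (N + 1), b i / e ^ i) + 1) * e ^ n := by nlinarith

lemma aux_ratio (p d : ℝ) (hp : 0 < p) (hd : 1 < d) (a : ℕ → ℝ)
    (ha : ∀ n : ℕ, a (n + 1) =
      a n * (((n : ℝ) * ((n : ℝ) - 1) + 2 * (d - 1) * (n : ℝ) - p * (d - 1)) /
        (2 * ((n : ℝ) + 1) * ((n : ℝ) + d - 1))))
    (e : ℝ) (he : 1 / 2 < e) :
    ∃ N : ℕ, ∀ n, N ≤ n →
      |a (n + 1)| * (((n:ℝ) + 2) * ((n:ℝ) + 3)) ≤ e * (|a n| * (((n:ℝ) + 1) * ((n:ℝ) + 2))) := by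
  have he2 : (0:ℝ) < 2 * e - 1 := by linarith
  obtain ⟨N, hN⟩ := exists_nat_ge ((3 + 8 * d + 4 * p * d) / (2 * e - 1) + 1)
  refine ⟨N, fun n hn => ?_⟩
  have hnN : ((3 + 8 * d + 4 * p * d) / (2 * e - 1) + 1) ≤ (n : ℝ) :=
    hN.trans (Nat.cast_le.mpr hn)
  have hdiv : (3 + 8 * d + 4 * p * d) / (2 * e - 1) ≤ (n : ℝ) := by linarith
  rw [div_le_iff₀ he2] at hdiv
  have hn1 : (1:ℝ) ≤ (n : ℝ) := by
    have h0 : (0:ℝ) < (3 + 8 * d + 4 * p * d) / (2 * e - 1) := by positivity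
    linarith
  have hn0 : (0:ℝ) ≤ (n : ℝ) := by linarith
  have hden : (0:ℝ) < 2 * ((n:ℝ) + 1) * ((n:ℝ) + d - 1) := by nlinarith
  set num : ℝ := (n : ℝ) * ((n : ℝ) - 1) + 2 * (d - 1) * (n : ℝ) - p * (d - 1) with hnumdef
  have habs : |num| ≤ (n:ℝ)^2 + 2 * d * (n:ℝ) + p * d := by
    rw [abs_le]
    constructor
    · nlinarith
    · nlinarith
  have hnum : |num| * ((n:ℝ) + 3) ≤ e * ((n:ℝ) + 1) * (2 * ((n:ℝ) + 1) * ((n:ℝ) + d - 1)) := by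
    have h1 : |num| * ((n:ℝ) + 3) ≤ ((n:ℝ)^2 + 2 * d * (n:ℝ) + p * d) * ((n:ℝ) + 3) :=
      mul_le_mul_of_nonneg_right habs (by linarith)
    refine h1.trans ?_
    have he0 : (0:ℝ) < e := by linarith
    have hsqn : (n:ℝ) ≤ (n:ℝ)^2 := by nlinarith
    have hsq1 : (1:ℝ) ≤ (n:ℝ)^2 := by nlinarith
    have key : (3 + 8 * d + 4 * p * d) * (n:ℝ)^2 ≤ (2 * e - 1) * (n:ℝ)^3 := by
      have := mul_le_mul_of_nonneg_right hdiv (sq_nonneg (n:ℝ))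
      linear_combination this
    have t1 : 6 * d * (n:ℝ) ≤ 6 * d * (n:ℝ)^2 :=
      mul_le_mul_of_nonneg_left hsqn (by linarith)
    have t2 : p * d * (n:ℝ) ≤ p * d * (n:ℝ)^2 :=
      mul_le_mul_of_nonneg_left hsqn (by positivity)
    have t3 : 3 * (p * d) * 1 ≤ 3 * (p * d) * (n:ℝ)^2 :=
      mul_le_mul_of_nonneg_left hsq1 (by positivity)
    have t4 : (0:ℝ) ≤ 2 * e * (d + 1) * (n:ℝ)^2 := by positivity
    have t5 : (0:ℝ) ≤ 2 * e * (2 * d - 1) * (n:ℝ) := by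
      have : (0:ℝ) ≤ 2 * d - 1 := by linarith
      positivity
    have t6 : (0:ℝ) ≤ 2 * e * (d - 1) := by
      have : (0:ℝ) ≤ d - 1 := by linarith
      positivity
    nlinarith [key, t1, t2, t3, t4, t5, t6]
  rw [ha n, abs_mul, abs_div, abs_of_pos hden]
  have goal' : |a n| * |num| * (((n:ℝ) + 2) * ((n:ℝ) + 3)) ≤
      (e * (|a n| * (((n:ℝ) + 1) * ((n:ℝ) + 2)))) * (2 * ((n:ℝ) + 1) * ((n:ℝ) + d - 1)) := by
    have := mul_le_mul_of_nonneg_left hnum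
      (mul_nonneg (abs_nonneg (a n)) (by linarith : (0:ℝ) ≤ (n:ℝ) + 2))
    linear_combination this
  have heq : |a n| * (|num| / (2 * ((n:ℝ) + 1) * ((n:ℝ) + d - 1))) * (((n:ℝ) + 2) * ((n:ℝ) + 3))
      = (|a n| * |num| * (((n:ℝ) + 2) * ((n:ℝ) + 3))) / (2 * ((n:ℝ) + 1) * ((n:ℝ) + d - 1)) := by
    field_simp
  rw [heq, div_le_iff₀ hden]
  linarith


section
variable (p d : ℝ) (a : ℕ → ℝ)

set_option maxHeartbeats 2000000 in
theorem stmt1' (hp : 0 < p) (hd : 1 < d)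
    (ha0 : a 0 = -1)
    (ha : ∀ n : ℕ, a (n + 1) =
      a n * (((n : ℝ) * ((n : ℝ) - 1) + 2 * (d - 1) * (n : ℝ) - p * (d - 1)) /
        (2 * ((n : ℝ) + 1) * ((n : ℝ) + d - 1)))) :
    ∀ s ∈ Set.Ioo (-1 : ℝ) 1,
      (1 - s ^ 2) * iteratedDeriv 2 (fun t : ℝ => ∑' n : ℕ, a n * (1 + t) ^ n) s
        - 2 * (d - 1) * s * deriv (fun t : ℝ => ∑' n : ℕ, a n * (1 + t) ^ n) s
        + p * (d - 1) * (∑' n : ℕ, a n * (1 + s) ^ n) = 0 := by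
  have hd0 : (0:ℝ) < d := by linarith
  intro s hs
  obtain ⟨hs1, hs2⟩ := hs
  have hsabs : |s| < 1 := abs_lt.mpr ⟨hs1, hs2⟩
  set β : ℝ := (|s| + 1) / 2 with hβdef
  have habs0 := abs_nonneg s
  have hβ0 : 0 < β := by rw [hβdef]; linarith
  have hβ1 : β < 1 := by rw [hβdef]; linarith
  have hsβ : |s| < β := by rw [hβdef]; linarith
  have hsT : s ∈ Set.Ioo (-β) β := by
    have := abs_lt.mp hsβ
    exact ⟨this.1, this.2⟩
  have h0T : (0:ℝ) ∈ Set.Ioo (-β) β := ⟨by linarith, hβ0⟩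
  set e : ℝ := (1/2 + 1/(1+β))/2 with hedef
  have h1β : 1/2 < 1/(1+β) := by
    rw [lt_div_iff₀ (by linarith : (0:ℝ) < 1 + β)]; linarith
  have h1β' : 1/(1+β) ≤ 1 := by
    rw [div_le_one (by linarith : (0:ℝ) < 1 + β)]; linarith
  have he : 1/2 < e := by rw [hedef]; linarith
  have he0 : 0 < e := by linarith
  have he1b : e * (1+β) < 1 := by
    have h2 : e < 1/(1+β) := by rw [hedef]; linarith
    have h3 := mul_lt_mul_of_pos_right h2 (show (0:ℝ) < 1+β by linarith)
    rwa [div_mul_cancel₀ 1 (by linarith : (1:ℝ)+β ≠ 0)] at h3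
  have hq0 : (0:ℝ) ≤ e * (1+β) := by positivity
  obtain ⟨N, hN⟩ := aux_ratio p d hp hd a ha e he
  obtain ⟨C, hC0, hC⟩ := aux_geom (fun n => |a n| * (((n:ℝ)+1) * ((n:ℝ)+2)))
    (fun n => by positivity) he0 N
    (fun n hn => by push_cast; linarith [hN n hn])

  set M : ℝ := (p*d + 2*d + 3) * C with hMdef
  have hM3 : (0:ℝ) < p*d + 2*d + 3 := by nlinarith
  have hu : Summable (fun n : ℕ => M * (e * (1+β))^n) :=
    (summable_geometric_of_lt_one hq0 he1b).mul_left M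
  -- master termwise bound
  have hbd : ∀ (co : ℝ) (n k : ℕ) (t : ℝ), t ∈ Set.Ioo (-β) β → k ≤ n →
      |co| ≤ (p*d + 2*d + 3) * (((n:ℝ)+1) * ((n:ℝ)+2)) →
      |a n| * |co| * |1+t|^k ≤ M * (e * (1+β))^n := by
    intro co n k t ht hk hco
    have ht1 : |1+t| ≤ 1+β := by
      rw [abs_le]; exact ⟨by linarith [ht.1], by linarith [ht.2]⟩
    have h1 : |1+t|^k ≤ (1+β)^k := pow_le_pow_left₀ (abs_nonneg _) ht1 k
    have h2 : (1+β)^k ≤ (1+β)^n := pow_le_pow_right₀ (by linarith) hk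
    have step1 : |a n| * |co| * |1+t|^k
        ≤ |a n| * ((p*d + 2*d + 3) * (((n:ℝ)+1) * ((n:ℝ)+2))) * (1+β)^n := by
      have e1 : |a n| * |co| ≤ |a n| * ((p*d + 2*d + 3) * (((n:ℝ)+1) * ((n:ℝ)+2))) :=
        mul_le_mul_of_nonneg_left hco (abs_nonneg _)
      exact mul_le_mul e1 (h1.trans h2) (pow_nonneg (abs_nonneg _) k)
        (mul_nonneg (abs_nonneg _) (mul_nonneg hM3.le (by positivity)))
    have step2 : |a n| * ((p*d + 2*d + 3) * (((n:ℝ)+1) * ((n:ℝ)+2))) * (1+β)^n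
        = (p*d + 2*d + 3) * (|a n| * (((n:ℝ)+1) * ((n:ℝ)+2))) * (1+β)^n := by ring
    have step3 : (p*d + 2*d + 3) * (|a n| * (((n:ℝ)+1) * ((n:ℝ)+2))) * (1+β)^n
        ≤ (p*d + 2*d + 3) * (C * e^n) * (1+β)^n :=
      mul_le_mul_of_nonneg_right (mul_le_mul_of_nonneg_left (hC n) hM3.le)
        (pow_nonneg (by linarith) n)
    have step4 : (p*d + 2*d + 3) * (C * e^n) * (1+β)^n = M * (e * (1+β))^n := by
      rw [mul_pow, hMdef]; ring
    linarith [step1, step2.le, step3, step4.le]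
  have hn0 : ∀ n : ℕ, (0:ℝ) ≤ (n:ℝ) := fun n => Nat.cast_nonneg n
  have hco3 : ∀ n : ℕ, 3 * (((n:ℝ)+1) * ((n:ℝ)+2))
      ≤ (p*d + 2*d + 3) * (((n:ℝ)+1) * ((n:ℝ)+2)) := by
    intro n
    have h3 : (3:ℝ) ≤ p*d + 2*d + 3 := by nlinarith
    exact mul_le_mul_of_nonneg_right h3 (by positivity)
  -- bounds for the three series
  have hu0 : ∀ (n : ℕ) (t : ℝ), t ∈ Set.Ioo (-β) β →
      ‖a n * (1+t)^n‖ ≤ M * (e * (1+β))^n := by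
    intro n t ht
    have hco : |(1:ℝ)| ≤ (p*d + 2*d + 3) * (((n:ℝ)+1) * ((n:ℝ)+2)) := by
      rw [abs_one]
      refine le_trans ?_ (hco3 n)
      nlinarith [hn0 n]
    have h := hbd 1 n n t ht le_rfl hco
    calc ‖a n * (1+t)^n‖ = |a n| * |(1:ℝ)| * |1+t|^n := by
          rw [Real.norm_eq_abs, abs_mul, abs_pow, abs_one, mul_one]
      _ ≤ M * (e * (1+β))^n := h
  have hu1 : ∀ (n : ℕ) (t : ℝ), t ∈ Set.Ioo (-β) β →
      ‖a n * (n:ℝ) * (1+t)^(n-1)‖ ≤ M * (e * (1+β))^n := by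
    intro n t ht
    have hco : |(n:ℝ)| ≤ (p*d + 2*d + 3) * (((n:ℝ)+1) * ((n:ℝ)+2)) := by
      rw [abs_of_nonneg (hn0 n)]
      refine le_trans ?_ (hco3 n)
      nlinarith [hn0 n]
    have h := hbd ((n:ℝ)) n (n-1) t ht (Nat.sub_le n 1) hco
    calc ‖a n * (n:ℝ) * (1+t)^(n-1)‖ = |a n| * |(n:ℝ)| * |1+t|^(n-1) := by
          rw [Real.norm_eq_abs, abs_mul, abs_mul, abs_pow]
      _ ≤ M * (e * (1+β))^n := h
  have hu2 : ∀ (n : ℕ) (t : ℝ), t ∈ Set.Ioo (-β) β →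
      ‖a n * (n:ℝ) * ((n:ℝ) - 1) * (1+t)^(n-2)‖ ≤ M * (e * (1+β))^n := by
    intro n t ht
    have hco : |(n:ℝ) * ((n:ℝ) - 1)| ≤ (p*d + 2*d + 3) * (((n:ℝ)+1) * ((n:ℝ)+2)) := by
      refine le_trans ?_ (hco3 n)
      rw [abs_le]
      constructor
      · nlinarith [hn0 n]
      · nlinarith [hn0 n]
    have h := hbd ((n:ℝ) * ((n:ℝ) - 1)) n (n-2) t ht (Nat.sub_le n 2) hco
    calc ‖a n * (n:ℝ) * ((n:ℝ) - 1) * (1+t)^(n-2)‖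
        = |a n| * |(n:ℝ) * ((n:ℝ) - 1)| * |1+t|^(n-2) := by
          rw [Real.norm_eq_abs, abs_mul, abs_mul, abs_mul, abs_pow, abs_mul]; ring
      _ ≤ M * (e * (1+β))^n := h
  -- summability of the three series at any point of the interval
  have hS0 : ∀ t ∈ Set.Ioo (-β) β, Summable (fun n : ℕ => a n * (1+t)^n) :=
    fun t ht => Summable.of_norm_bounded hu (fun n => hu0 n t ht)
  have hS1 : ∀ t ∈ Set.Ioo (-β) β, Summable (fun n : ℕ => a n * (n:ℝ) * (1+t)^(n-1)) :=
    fun t ht => Summable.of_norm_bounded hu (fun n => hu1 n t ht)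
  have hS2 : ∀ t ∈ Set.Ioo (-β) β,
      Summable (fun n : ℕ => a n * (n:ℝ) * ((n:ℝ) - 1) * (1+t)^(n-2)) :=
    fun t ht => Summable.of_norm_bounded hu (fun n => hu2 n t ht)
  -- first derivative
  have hDA : ∀ (n : ℕ) (y : ℝ), HasDerivAt (fun z : ℝ => a n * (1+z)^n)
      (a n * (n:ℝ) * (1+y)^(n-1)) y := by
    intro n y
    have h1 : HasDerivAt (fun z : ℝ => 1 + z) 1 y := by
      simpa using (hasDerivAt_id y).const_add (1:ℝ)
    have h2 := (h1.pow n).const_mul (a n)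
    convert h2 using 1
    all_goals first | rfl | ring
  have hA : ∀ t ∈ Set.Ioo (-β) β,
      HasDerivAt (fun z : ℝ => ∑' n : ℕ, a n * (1+z)^n)
        (∑' n : ℕ, a n * (n:ℝ) * (1+t)^(n-1)) t := by
    intro t ht
    exact hasDerivAt_tsum_of_isPreconnected hu isOpen_Ioo isPreconnected_Ioo
      (fun n y _ => hDA n y) (fun n y hy => hu1 n y hy) h0T (hS0 0 h0T) ht
  -- second derivative
  have hDB : ∀ (n : ℕ) (y : ℝ), HasDerivAt (fun z : ℝ => a n * (n:ℝ) * (1+z)^(n-1))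
      (a n * (n:ℝ) * ((n:ℝ) - 1) * (1+y)^(n-2)) y := by
    intro n y
    match n with
    | 0 =>
      simp only [Nat.cast_zero, mul_zero, zero_mul]
      exact hasDerivAt_const y 0
    | (m+1) =>
      have h1 : HasDerivAt (fun z : ℝ => 1 + z) 1 y := by
        simpa using (hasDerivAt_id y).const_add (1:ℝ)
      have h2 := (h1.pow m).const_mul (a (m+1) * ((m+1 : ℕ) : ℝ))
      have hf : (fun z : ℝ => a (m+1) * ((m+1 : ℕ) : ℝ) * (1+z)^(m+1-1))
          = fun z : ℝ => a (m+1) * ((m+1 : ℕ) : ℝ) * (1+z)^m := by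
        norm_num
      rw [hf]
      have hexp : m + 1 - 2 = m - 1 := by omega
      rw [hexp]
      convert h2 using 1
      all_goals first | rfl | (push_cast; ring)
  have hB : ∀ t ∈ Set.Ioo (-β) β,
      HasDerivAt (fun z : ℝ => ∑' n : ℕ, a n * (n:ℝ) * (1+z)^(n-1))
        (∑' n : ℕ, a n * (n:ℝ) * ((n:ℝ) - 1) * (1+t)^(n-2)) t := by
    intro t ht
    exact hasDerivAt_tsum_of_isPreconnected hu isOpen_Ioo isPreconnected_Ioo
      (fun n y _ => hDB n y) (fun n y hy => hu2 n y hy) h0T (hS1 0 h0T) ht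
  -- identify the derivatives in the statement
  have hg1 : deriv (fun t : ℝ => ∑' n : ℕ, a n * (1 + t) ^ n) s
      = ∑' n : ℕ, a n * (n:ℝ) * (1+s)^(n-1) := (hA s hsT).deriv
  have hg2 : iteratedDeriv 2 (fun t : ℝ => ∑' n : ℕ, a n * (1 + t) ^ n) s
      = ∑' n : ℕ, a n * (n:ℝ) * ((n:ℝ) - 1) * (1+s)^(n-2) := by
    rw [iteratedDeriv_succ, iteratedDeriv_one]
    have hmem : Set.Ioo (-β) β ∈ 𝓝 s := isOpen_Ioo.mem_nhds hsT
    have heq : deriv (fun t : ℝ => ∑' n : ℕ, a n * (1 + t) ^ n)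
        =ᶠ[𝓝 s] fun t : ℝ => ∑' n : ℕ, a n * (n:ℝ) * (1+t)^(n-1) :=
      Filter.eventuallyEq_of_mem hmem (fun t ht => (hA t ht).deriv)
    rw [heq.deriv_eq]
    exact (hB s hsT).deriv
  rw [hg1, hg2]
  -- algebraic identity between the series
  set c : ℕ → ℝ := fun n => 2 * (n:ℝ) * ((n:ℝ) + d - 2) * a n with hcdef
  set E : ℕ → ℝ := fun n => (p * (d-1) - (n:ℝ) * ((n:ℝ) - 1) - 2 * (d-1) * (n:ℝ)) * a n
    with hEdef
  have Sc : Summable (fun n : ℕ => c n * (1+s)^(n-1)) := by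
    apply Summable.of_norm_bounded hu
    intro n
    have hco : |2 * (n:ℝ) * ((n:ℝ) + d - 2)| ≤ (p*d + 2*d + 3) * (((n:ℝ)+1) * ((n:ℝ)+2)) := by
      rw [abs_le]
      constructor
      · nlinarith [hn0 n, sq_nonneg ((n:ℝ)), mul_nonneg (mul_nonneg hp.le hd0.le) (hn0 n),
          mul_nonneg hd0.le (hn0 n), mul_nonneg (mul_nonneg hp.le hd0.le) (sq_nonneg ((n:ℝ))),
          mul_nonneg hd0.le (sq_nonneg ((n:ℝ)))]
      · nlinarith [hn0 n, sq_nonneg ((n:ℝ)), mul_nonneg (mul_nonneg hp.le hd0.le) (hn0 n),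
          mul_nonneg hd0.le (hn0 n), mul_nonneg (mul_nonneg hp.le hd0.le) (sq_nonneg ((n:ℝ))),
          mul_nonneg hd0.le (sq_nonneg ((n:ℝ)))]
    have h := hbd (2 * (n:ℝ) * ((n:ℝ) + d - 2)) n (n-1) s hsT (Nat.sub_le n 1) hco
    calc ‖c n * (1+s)^(n-1)‖ = |a n| * |2 * (n:ℝ) * ((n:ℝ) + d - 2)| * |1+s|^(n-1) := by
          rw [Real.norm_eq_abs, hcdef, abs_mul, abs_pow, abs_mul]; ring
      _ ≤ M * (e * (1+β))^n := h
  have SE : Summable (fun n : ℕ => E n * (1+s)^n) := by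
    apply Summable.of_norm_bounded hu
    intro n
    have hco : |p * (d-1) - (n:ℝ) * ((n:ℝ) - 1) - 2 * (d-1) * (n:ℝ)|
        ≤ (p*d + 2*d + 3) * (((n:ℝ)+1) * ((n:ℝ)+2)) := by
      rw [abs_le]
      constructor
      · nlinarith [hn0 n, sq_nonneg ((n:ℝ)), mul_nonneg (mul_nonneg hp.le hd0.le) (hn0 n),
          mul_nonneg hd0.le (hn0 n), mul_nonneg (mul_nonneg hp.le hd0.le) (sq_nonneg ((n:ℝ))),
          mul_nonneg hd0.le (sq_nonneg ((n:ℝ)))]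
      · nlinarith [hn0 n, sq_nonneg ((n:ℝ)), mul_nonneg (mul_nonneg hp.le hd0.le) (hn0 n),
          mul_nonneg hd0.le (hn0 n), mul_nonneg (mul_nonneg hp.le hd0.le) (sq_nonneg ((n:ℝ))),
          mul_nonneg hd0.le (sq_nonneg ((n:ℝ)))]
    have h := hbd (p * (d-1) - (n:ℝ) * ((n:ℝ) - 1) - 2 * (d-1) * (n:ℝ)) n n s hsT le_rfl hco
    calc ‖E n * (1+s)^n‖
        = |a n| * |p * (d-1) - (n:ℝ) * ((n:ℝ) - 1) - 2 * (d-1) * (n:ℝ)| * |1+s|^n := by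
          rw [Real.norm_eq_abs, hEdef, abs_mul, abs_pow, abs_mul]; ring
      _ ≤ M * (e * (1+β))^n := h
  have hT : ∀ n : ℕ,
      (1 - s^2) * (a n * (n:ℝ) * ((n:ℝ) - 1) * (1+s)^(n-2))
        - 2 * (d-1) * s * (a n * (n:ℝ) * (1+s)^(n-1))
        + p * (d-1) * (a n * (1+s)^n)
      = c n * (1+s)^(n-1) + E n * (1+s)^n := by
    intro n
    rw [hcdef, hEdef]
    match n with
    | 0 => norm_num
    | 1 => push_cast; ring_nf
    | (m+2) =>
      have e1 : m + 2 - 2 = m := by omega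
      have e2 : m + 2 - 1 = m + 1 := by omega
      rw [e1, e2]
      push_cast
      ring
  have hcE : ∀ n : ℕ, c (n+1) + E n = 0 := by
    intro n
    rw [hcdef, hEdef]
    simp only
    rw [ha n]
    have hden : (2 * ((n:ℝ) + 1) * ((n:ℝ) + d - 1)) ≠ 0 := by
      have : (0:ℝ) < 2 * ((n:ℝ) + 1) * ((n:ℝ) + d - 1) := by
        have := hn0 n
        nlinarith
      exact this.ne'
    have hnd : ((n:ℝ) + d - 1) ≠ 0 := by have := hn0 n; intro h; apply hden; rw [h]; ring
    push_cast
    field_simp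
    ring
  have key : ∑' n : ℕ,
      ((1 - s^2) * (a n * (n:ℝ) * ((n:ℝ) - 1) * (1+s)^(n-2))
        - 2 * (d-1) * s * (a n * (n:ℝ) * (1+s)^(n-1))
        + p * (d-1) * (a n * (1+s)^n)) = 0 := by
    rw [tsum_congr hT, Summable.tsum_add Sc SE, Summable.tsum_eq_zero_add Sc]
    have hc0 : c 0 * (1+s)^(0-1) = 0 := by rw [hcdef]; norm_num
    rw [hc0, zero_add]
    have Sc' : Summable (fun n : ℕ => c (n+1) * (1+s)^(n+1-1)) :=
      (summable_nat_add_iff 1).mpr Sc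
    rw [← Summable.tsum_add Sc' SE]
    have : ∀ n : ℕ, c (n+1) * (1+s)^(n+1-1) + E n * (1+s)^n = 0 := by
      intro n
      have e1 : n + 1 - 1 = n := by omega
      rw [e1, ← add_mul, hcE n, zero_mul]
    rw [tsum_congr this, tsum_zero]
  have expand : ∑' n : ℕ,
      ((1 - s^2) * (a n * (n:ℝ) * ((n:ℝ) - 1) * (1+s)^(n-2))
        - 2 * (d-1) * s * (a n * (n:ℝ) * (1+s)^(n-1))
        + p * (d-1) * (a n * (1+s)^n))
      = (1 - s^2) * (∑' n : ℕ, a n * (n:ℝ) * ((n:ℝ) - 1) * (1+s)^(n-2))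
        - 2 * (d-1) * s * (∑' n : ℕ, a n * (n:ℝ) * (1+s)^(n-1))
        + p * (d-1) * (∑' n : ℕ, a n * (1+s)^n) := by
    rw [Summable.tsum_add (((hS2 s hsT).mul_left _).sub ((hS1 s hsT).mul_left _)) ((hS0 s hsT).mul_left _),
      Summable.tsum_sub ((hS2 s hsT).mul_left _) ((hS1 s hsT).mul_left _),
      tsum_mul_left, tsum_mul_left, tsum_mul_left]
  rw [← expand]
  exact key
end
/-- the power series `g(s) = ∑ a n (1+s)^n` with coefficients given by
the recurrence solves `(1-s²)g'' - 2(d-1)s g' + p(d-1)g = 0` on `(-1,1)`. -/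
theorem stmt1 (p d : ℝ) (hp : 0 < p) (hd : 1 < d) (a : ℕ → ℝ)
    (ha0 : a 0 = -1)
    (ha : ∀ n : ℕ, a (n + 1) =
      a n * (((n : ℝ) * ((n : ℝ) - 1) + 2 * (d - 1) * (n : ℝ) - p * (d - 1)) /
        (2 * ((n : ℝ) + 1) * ((n : ℝ) + d - 1)))) :
    ∀ s ∈ Set.Ioo (-1 : ℝ) 1,
      (1 - s ^ 2) * iteratedDeriv 2 (fun t : ℝ => ∑' n : ℕ, a n * (1 + t) ^ n) s
        - 2 * (d - 1) * s * deriv (fun t : ℝ => ∑' n : ℕ, a n * (1 + t) ^ n) s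
        + p * (d - 1) * (∑' n : ℕ, a n * (1 + s) ^ n) = 0 :=
  stmt1' p d a hp hd ha0 ha
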